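/- Let m1, m2 ≥ 1 and T be integers with T ≥ 2(m1+m2)+2, and fix a real number q ≥ 2. For nonnegative integers d1 ≤ m1, d2 ≤ m2 define R1(d1,d2) = d1(T−d1−d2)·log2 q, R2(d1,d2) = d2(T−d1−d2)·log2 q, the rectangle R(d1,d2) = {(x,y) ∈ ℝ² : 0 ≤ x ≤ R1(d1,d2), 0 ≤ y ≤ R2(d1,d2)}, and R_col = convex hull of the union of R(d1,d2) over all 0 ≤ d1 ≤ m1, 0 ≤ d2 ≤ m2. Then the set of extreme points of R_col other than the origin (0,0) is exactly { (R1(d1,d2), R2(d1,d2)) : (d1,d2) ∈ D̃ }, where D̃ = {(d1,m2) : 0 ≤ d1 ≤ m1} ∪ {(m1,d2) : 0 ≤ d2 ≤ m2}. -/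

import Mathlib

open Finset

/- The rate pair `(R1(d1,d2), R2(d1,d2))` with
`Ri(d1,d2) = di·(T−d1−d2)·log2 q`. -/
noncomputable def rate1 (T : ℕ) (q : ℝ) (d1 d2 : ℕ) : ℝ :=
  (d1 : ℝ) * ((T : ℝ) - (d1 : ℝ) - (d2 : ℝ)) * Real.logb 2 q

noncomputable def rate2 (T : ℕ) (q : ℝ) (d1 d2 : ℕ) : ℝ :=
  (d2 : ℝ) * ((T : ℝ) - (d1 : ℝ) - (d2 : ℝ)) * Real.logb 2 q

/- The rectangle `R(d1,d2) = {(x,y) : 0 ≤ x ≤ R1(d1,d2), 0 ≤ y ≤ R2(d1,d2)}`. -/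
noncomputable def rateRect (T : ℕ) (q : ℝ) (d1 d2 : ℕ) : Set (ℝ × ℝ) :=
  {p : ℝ × ℝ | 0 ≤ p.1 ∧ p.1 ≤ rate1 T q d1 d2 ∧ 0 ≤ p.2 ∧ p.2 ≤ rate2 T q d1 d2}

/- The coloring outer bound region: the convex hull of the union of the rectangles
`R(d1,d2)` over all `0 ≤ d1 ≤ m1`, `0 ≤ d2 ≤ m2`. -/
noncomputable def rateRegionCol (T m1 m2 : ℕ) (q : ℝ) : Set (ℝ × ℝ) :=
  convexHull ℝ (⋃ (d1 : ℕ) (_ : d1 ≤ m1) (d2 : ℕ) (_ : d2 ≤ m2), rateRect T q d1 d2)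

private lemma key_le (M K E1 E2 t : ℝ) (hM : 1 ≤ M)
    (hE1 : 0 ≤ E1) (hE1M : E1 ≤ M) (hE2 : 0 ≤ E2) (hE12 : E1 + E2 ≤ t)
    (ht : 2*M + 2*K + 2 ≤ t) :
    (t - M - 2*K) * (E1 * (t - E1 - E2)) + M * (E2 * (t - E1 - E2)) ≤ M * (t - M - K)^2 := by
  have hApos : 0 ≤ (t - M - 2*K) * E1 + M * E2 := by nlinarith
  have hBpos : 0 ≤ M * (t - E1 - E2) := by nlinarith
  have hsum : ((t - M - 2*K) * E1 + M * E2) + M * (t - E1 - E2) ≤ 2 * M * (t - M - K) := by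
    nlinarith [mul_nonneg (show (0:ℝ) ≤ t - 2*M - 2*K by linarith)
      (show (0:ℝ) ≤ M - E1 by linarith)]
  have h4 : ((t - M - 2*K) * E1 + M * E2) * (M * (t - E1 - E2)) ≤ (M * (t - M - K))^2 := by
    nlinarith [sq_nonneg (((t - M - 2*K) * E1 + M * E2) - M * (t - E1 - E2)),
      mul_nonneg (show (0:ℝ) ≤ 2 * M * (t - M - K) - (((t - M - 2*K) * E1 + M * E2) + M * (t - E1 - E2)) by linarith) (add_nonneg hApos hBpos),
      mul_nonneg (show (0:ℝ) ≤ 2 * M * (t - M - K) - (((t - M - 2*K) * E1 + M * E2) + M * (t - E1 - E2)) by linarith) (show (0:ℝ) ≤ 2 * M * (t - M - K) by nlinarith)]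
  nlinarith [h4, hM]

private lemma key_eq (M K E1 E2 t : ℝ) (hM : 1 ≤ M) (hK : 0 ≤ K)
    (hE1 : 0 ≤ E1) (hE1M : E1 ≤ M) (hE2 : 0 ≤ E2) (hE12 : E1 + E2 ≤ t)
    (ht : 2*M + 2*K + 2 ≤ t)
    (h : (t - M - 2*K) * (E1 * (t - E1 - E2)) + M * (E2 * (t - E1 - E2)) = M * (t - M - K)^2) :
    E1 = M ∧ E2 = K := by
  set A := (t - M - 2*K) * E1 + M * E2 with hA
  set B := M * (t - E1 - E2) with hB
  have hMpos : (0:ℝ) < M := by linarith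
  have hXpos : (0:ℝ) < M * (t - M - K) := by nlinarith
  have hApos : 0 ≤ A := by rw [hA]; nlinarith
  have hBpos : 0 ≤ B := by rw [hB]; nlinarith
  have hsum : A + B ≤ 2 * M * (t - M - K) := by
    rw [hA, hB]
    nlinarith [mul_nonneg (show (0:ℝ) ≤ t - 2*M - 2*K by linarith)
      (show (0:ℝ) ≤ M - E1 by linarith)]
  have hABprod : A * B = (M * (t - M - K))^2 := by
    rw [hA, hB]; linear_combination M * h
  have hAB : A = B := by
    nlinarith [sq_nonneg (A - B), mul_nonneg (show (0:ℝ) ≤ 2 * M * (t - M - K) - (A + B) by linarith) (add_nonneg hApos hBpos),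
      mul_nonneg (show (0:ℝ) ≤ 2 * M * (t - M - K) - (A + B) by linarith) hXpos.le]
  have hfac : (A - M * (t - M - K)) * (A + M * (t - M - K)) = 0 := by
    linear_combination hABprod + A * hAB
  have hA' : A = M * (t - M - K) := by
    rcases mul_eq_zero.mp hfac with h1 | h1
    · linarith
    · linarith
  have hB' : B = M * (t - M - K) := hAB ▸ hA'
  have hsum2 : E1 + E2 = M + K := by
    rw [hB] at hB'
    have := mul_left_cancel₀ (ne_of_gt hMpos) hB'
    linarith
  have hfac2 : (t - 2*M - 2*K) * (E1 - M) = 0 := by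
    rw [hA] at hA'
    linear_combination hA' - M * hsum2
  have hE1M' : E1 = M := by
    rcases mul_eq_zero.mp hfac2 with h1 | h1
    · linarith
    · linarith
  exact ⟨hE1M', by linarith⟩

private lemma extremePoint_of_exposed {U : Set (ℝ × ℝ)} {a b c : ℝ} {p : ℝ × ℝ}
    (hp : p ∈ U) (hpc : a * p.1 + b * p.2 = c)
    (hle : ∀ z ∈ U, a * z.1 + b * z.2 ≤ c)
    (heq : ∀ z ∈ U, a * z.1 + b * z.2 = c → z = p) :
    p ∈ Set.extremePoints ℝ (convexHull ℝ U) := by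
  set S : Set (ℝ × ℝ) := {z | a * z.1 + b * z.2 < c} ∪ {p} with hS
  have hfS : ∀ z ∈ S, a * z.1 + b * z.2 ≤ c := by
    rintro z (hz | hz)
    · exact le_of_lt hz
    · rw [Set.mem_singleton_iff] at hz; rw [hz]; exact le_of_eq hpc
  have hsmul : ∀ (u v : ℝ) (x y : ℝ × ℝ),
      a * (u • x + v • y).1 + b * (u • x + v • y).2
        = u * (a * x.1 + b * x.2) + v * (a * y.1 + b * y.2) := by
    intro u v x y
    simp [Prod.fst_add, Prod.snd_add, Prod.smul_fst, Prod.smul_snd, smul_eq_mul]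
    ring
  have hconv : Convex ℝ S := by
    intro x hx y hy u v hu hv huv
    rcases hu.eq_or_lt with h0 | hu'
    · have hv1 : v = 1 := by linarith
      rw [← h0, hv1]; simpa using hy
    rcases hv.eq_or_lt with h0 | hv'
    · have hu1 : u = 1 := by linarith
      rw [← h0, hu1]; simpa using hx
    by_cases hxy : x = p ∧ y = p
    · right
      rw [Set.mem_singleton_iff, hxy.1, hxy.2, ← add_smul, huv, one_smul]
    · left
      show a * (u • x + v • y).1 + b * (u • x + v • y).2 < c
      rw [hsmul]
      have hxle := hfS x hx
      have hyle := hfS y hy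
      rcases not_and_or.mp hxy with h | h
      · have hxlt : a * x.1 + b * x.2 < c := by
          rcases hx with h' | h'
          · exact h'
          · exact absurd h' h
        have h1 := mul_lt_mul_of_pos_left hxlt hu'
        have h2 := mul_le_mul_of_nonneg_left hyle hv
        have h3 : u * c + v * c = c := by rw [← add_mul, huv, one_mul]
        linarith
      · have hylt : a * y.1 + b * y.2 < c := by
          rcases hy with h' | h'
          · exact h'
          · exact absurd h' h
        have h1 := mul_lt_mul_of_pos_left hylt hv'
        have h2 := mul_le_mul_of_nonneg_left hxle hu
        have h3 : u * c + v * c = c := by rw [← add_mul, huv, one_mul]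
        linarith
  have hUS : U ⊆ S := by
    intro z hz
    by_cases h : z = p
    · right; exact h
    · left; exact lt_of_le_of_ne (hle z hz) fun hc => h (heq z hz hc)
  have hhull : convexHull ℝ U ⊆ S := convexHull_min hUS hconv
  refine mem_extremePoints.2 ⟨subset_convexHull ℝ U hp, ?_⟩
  rintro x hx y hy ⟨u, v, hu, hv, huv, hxyp⟩
  have hxS := hhull hx
  have hyS := hhull hy
  have hfx := hfS x hxS
  have hfy := hfS y hyS
  have hfp : u * (a * x.1 + b * x.2) + v * (a * y.1 + b * y.2) = c := by
    rw [← hsmul, hxyp]; exact hpc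
  have hfxc : a * x.1 + b * x.2 = c := by
    by_contra hne
    have hlt : a * x.1 + b * x.2 < c := lt_of_le_of_ne hfx hne
    have h1 := mul_lt_mul_of_pos_left hlt hu
    have h2 := mul_le_mul_of_nonneg_left hfy hv.le
    have h3 : u * c + v * c = c := by rw [← add_mul, huv, one_mul]
    linarith
  have hfyc : a * y.1 + b * y.2 = c := by
    by_contra hne
    have hlt : a * y.1 + b * y.2 < c := lt_of_le_of_ne hfy hne
    have h1 := mul_lt_mul_of_pos_left hlt hv
    have h2 := mul_le_mul_of_nonneg_left hfx hu.le
    have h3 : u * c + v * c = c := by rw [← add_mul, huv, one_mul]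
    linarith
  constructor
  · rcases hxS with h | h
    · exact absurd hfxc (ne_of_lt h)
    · exact h
  · rcases hyS with h | h
    · exact absurd hfyc (ne_of_lt h)
    · exact h

private lemma corner_extreme (m1 m2 T : ℕ) (q : ℝ)
    (hm1 : 1 ≤ m1) (hm2 : 1 ≤ m2) (hT : 2 * (m1 + m2) + 2 ≤ T) (hq : 2 ≤ q)
    (d1 d2 : ℕ) (hd1 : d1 ≤ m1) (hd2 : d2 ≤ m2) (hd : d1 = m1 ∨ d2 = m2) :
    (rate1 T q d1 d2, rate2 T q d1 d2) ∈ Set.extremePoints ℝ (rateRegionCol T m1 m2 q) := by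
  have hL : 0 < Real.logb 2 q := Real.logb_pos one_lt_two (by linarith)
  have hTr : 2 * ((m1:ℝ) + (m2:ℝ)) + 2 ≤ (T:ℝ) := by exact_mod_cast hT
  have hm1r : (1:ℝ) ≤ (m1:ℝ) := by exact_mod_cast hm1
  have hm2r : (1:ℝ) ≤ (m2:ℝ) := by exact_mod_cast hm2
  have hd1r : (d1:ℝ) ≤ (m1:ℝ) := by exact_mod_cast hd1
  have hd2r : (d2:ℝ) ≤ (m2:ℝ) := by exact_mod_cast hd2
  rw [rateRegionCol]
  set U : Set (ℝ × ℝ) :=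
    ⋃ (e1 : ℕ) (_ : e1 ≤ m1) (e2 : ℕ) (_ : e2 ≤ m2), rateRect T q e1 e2 with hUdef
  have hmemU : ∀ z : ℝ × ℝ, z ∈ U ↔ ∃ e1, e1 ≤ m1 ∧ ∃ e2, e2 ≤ m2 ∧
      z ∈ rateRect T q e1 e2 := by
    intro z
    simp [hUdef, Set.mem_iUnion]
  rcases hd with h | h
  · rw [h]
    have hpU : (rate1 T q m1 d2, rate2 T q m1 d2) ∈ U := by
      rw [hmemU]
      refine ⟨m1, le_rfl, d2, hd2, ?_⟩
      refine ⟨?_, le_rfl, ?_, le_rfl⟩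
      · exact mul_nonneg (mul_nonneg (by positivity) (by linarith)) hL.le
      · exact mul_nonneg (mul_nonneg (by positivity) (by linarith)) hL.le
    set a : ℝ := (T:ℝ) - (m1:ℝ) - 2*(d2:ℝ) with hadef
    set b : ℝ := (m1:ℝ) with hbdef
    set c : ℝ := (m1:ℝ) * ((T:ℝ) - (m1:ℝ) - (d2:ℝ))^2 * Real.logb 2 q with hcdef
    have ha : 0 < a := by rw [hadef]; linarith
    have hb : 0 < b := by rw [hbdef]; linarith
    have hcorner : ∀ e1 e2 : ℕ, e1 ≤ m1 → e2 ≤ m2 →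
        a * rate1 T q e1 e2 + b * rate2 T q e1 e2 =
          (((T:ℝ) - (m1:ℝ) - 2*(d2:ℝ)) * ((e1:ℝ) * ((T:ℝ) - (e1:ℝ) - (e2:ℝ))) +
            (m1:ℝ) * ((e2:ℝ) * ((T:ℝ) - (e1:ℝ) - (e2:ℝ)))) * Real.logb 2 q := by
      intro e1 e2 _ _
      rw [hadef, hbdef, rate1, rate2]; ring
    have hkey : ∀ e1 e2 : ℕ, e1 ≤ m1 → e2 ≤ m2 →
        ((T:ℝ) - (m1:ℝ) - 2*(d2:ℝ)) * ((e1:ℝ) * ((T:ℝ) - (e1:ℝ) - (e2:ℝ))) +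
          (m1:ℝ) * ((e2:ℝ) * ((T:ℝ) - (e1:ℝ) - (e2:ℝ))) ≤
          (m1:ℝ) * ((T:ℝ) - (m1:ℝ) - (d2:ℝ))^2 := by
      intro e1 e2 he1 he2
      have he1r : (e1:ℝ) ≤ (m1:ℝ) := by exact_mod_cast he1
      have he2r : (e2:ℝ) ≤ (m2:ℝ) := by exact_mod_cast he2
      exact key_le (m1:ℝ) (d2:ℝ) (e1:ℝ) (e2:ℝ) (T:ℝ) hm1r (by positivity) he1r
        (by positivity) (by linarith) (by linarith)
    have hcle : ∀ e1 e2 : ℕ, e1 ≤ m1 → e2 ≤ m2 →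
        a * rate1 T q e1 e2 + b * rate2 T q e1 e2 ≤ c := by
      intro e1 e2 he1 he2
      rw [hcorner e1 e2 he1 he2, hcdef]
      exact mul_le_mul_of_nonneg_right (hkey e1 e2 he1 he2) hL.le
    have hpc : a * (rate1 T q m1 d2, rate2 T q m1 d2).1 +
        b * (rate1 T q m1 d2, rate2 T q m1 d2).2 = c := by
      show a * rate1 T q m1 d2 + b * rate2 T q m1 d2 = c
      rw [hadef, hbdef, hcdef, rate1, rate2]; ring
    refine extremePoint_of_exposed hpU hpc ?_ ?_
    · rintro z hz
      rw [hmemU] at hz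
      obtain ⟨e1, he1, e2, he2, hz0, hz1, hz2, hz3⟩ := hz
      have h1 := mul_le_mul_of_nonneg_left hz1 ha.le
      have h2 := mul_le_mul_of_nonneg_left hz3 hb.le
      have h3 := hcle e1 e2 he1 he2
      linarith
    · rintro z hz hzc
      rw [hmemU] at hz
      obtain ⟨e1, he1, e2, he2, hz0, hz1, hz2, hz3⟩ := hz
      have he1r : (e1:ℝ) ≤ (m1:ℝ) := by exact_mod_cast he1
      have he2r : (e2:ℝ) ≤ (m2:ℝ) := by exact_mod_cast he2
      have h1 := mul_le_mul_of_nonneg_left hz1 ha.le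
      have h2 := mul_le_mul_of_nonneg_left hz3 hb.le
      have h3 := hcle e1 e2 he1 he2
      have hceq : a * rate1 T q e1 e2 + b * rate2 T q e1 e2 = c := by linarith
      have hexpr : ((T:ℝ) - (m1:ℝ) - 2*(d2:ℝ)) * ((e1:ℝ) * ((T:ℝ) - (e1:ℝ) - (e2:ℝ))) +
          (m1:ℝ) * ((e2:ℝ) * ((T:ℝ) - (e1:ℝ) - (e2:ℝ))) =
          (m1:ℝ) * ((T:ℝ) - (m1:ℝ) - (d2:ℝ))^2 := by
        have := (hcorner e1 e2 he1 he2).symm.trans hceq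
        rw [hcdef] at this
        exact mul_right_cancel₀ (ne_of_gt hL) this
      obtain ⟨hE1, hE2⟩ := key_eq (m1:ℝ) (d2:ℝ) (e1:ℝ) (e2:ℝ) (T:ℝ) hm1r (by positivity)
        (by positivity) he1r (by positivity) (by linarith) (by linarith) hexpr
      have hR1 : rate1 T q e1 e2 = rate1 T q m1 d2 := by
        rw [rate1, rate1, hE1, hE2]
      have hR2 : rate2 T q e1 e2 = rate2 T q m1 d2 := by
        rw [rate2, rate2, hE1, hE2]
      rw [hR1] at hz1
      rw [hR2] at hz3
      have hzeq : a * z.1 + b * z.2 = a * rate1 T q m1 d2 + b * rate2 T q m1 d2 :=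
        hzc.trans hpc.symm
      have hz1e : z.1 = rate1 T q m1 d2 := by
        by_contra hne
        have hlt := lt_of_le_of_ne hz1 hne
        have := mul_lt_mul_of_pos_left hlt ha
        have := mul_le_mul_of_nonneg_left hz3 hb.le
        linarith
      have hz2e : z.2 = rate2 T q m1 d2 := by
        by_contra hne
        have hlt := lt_of_le_of_ne hz3 hne
        have := mul_lt_mul_of_pos_left hlt hb
        have := mul_le_mul_of_nonneg_left hz1 ha.le
        linarith
      exact Prod.ext hz1e hz2e
  · rw [h]
    have hpU : (rate1 T q d1 m2, rate2 T q d1 m2) ∈ U := by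
      rw [hmemU]
      refine ⟨d1, hd1, m2, le_rfl, ?_⟩
      refine ⟨?_, le_rfl, ?_, le_rfl⟩
      · exact mul_nonneg (mul_nonneg (by positivity) (by linarith)) hL.le
      · exact mul_nonneg (mul_nonneg (by positivity) (by linarith)) hL.le
    set a : ℝ := (m2:ℝ) with hadef
    set b : ℝ := (T:ℝ) - (m2:ℝ) - 2*(d1:ℝ) with hbdef
    set c : ℝ := (m2:ℝ) * ((T:ℝ) - (m2:ℝ) - (d1:ℝ))^2 * Real.logb 2 q with hcdef
    have ha : 0 < a := by rw [hadef]; linarith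
    have hb : 0 < b := by rw [hbdef]; linarith
    have hcorner : ∀ e1 e2 : ℕ, e1 ≤ m1 → e2 ≤ m2 →
        a * rate1 T q e1 e2 + b * rate2 T q e1 e2 =
          (((T:ℝ) - (m2:ℝ) - 2*(d1:ℝ)) * ((e2:ℝ) * ((T:ℝ) - (e2:ℝ) - (e1:ℝ))) +
            (m2:ℝ) * ((e1:ℝ) * ((T:ℝ) - (e2:ℝ) - (e1:ℝ)))) * Real.logb 2 q := by
      intro e1 e2 _ _
      rw [hadef, hbdef, rate1, rate2]; ring
    have hkey : ∀ e1 e2 : ℕ, e1 ≤ m1 → e2 ≤ m2 →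
        ((T:ℝ) - (m2:ℝ) - 2*(d1:ℝ)) * ((e2:ℝ) * ((T:ℝ) - (e2:ℝ) - (e1:ℝ))) +
          (m2:ℝ) * ((e1:ℝ) * ((T:ℝ) - (e2:ℝ) - (e1:ℝ))) ≤
          (m2:ℝ) * ((T:ℝ) - (m2:ℝ) - (d1:ℝ))^2 := by
      intro e1 e2 he1 he2
      have he1r : (e1:ℝ) ≤ (m1:ℝ) := by exact_mod_cast he1
      have he2r : (e2:ℝ) ≤ (m2:ℝ) := by exact_mod_cast he2
      exact key_le (m2:ℝ) (d1:ℝ) (e2:ℝ) (e1:ℝ) (T:ℝ) hm2r (by positivity) he2r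
        (by positivity) (by linarith) (by linarith)
    have hcle : ∀ e1 e2 : ℕ, e1 ≤ m1 → e2 ≤ m2 →
        a * rate1 T q e1 e2 + b * rate2 T q e1 e2 ≤ c := by
      intro e1 e2 he1 he2
      rw [hcorner e1 e2 he1 he2, hcdef]
      exact mul_le_mul_of_nonneg_right (hkey e1 e2 he1 he2) hL.le
    have hpc : a * (rate1 T q d1 m2, rate2 T q d1 m2).1 +
        b * (rate1 T q d1 m2, rate2 T q d1 m2).2 = c := by
      show a * rate1 T q d1 m2 + b * rate2 T q d1 m2 = c
      rw [hadef, hbdef, hcdef, rate1, rate2]; ring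
    refine extremePoint_of_exposed hpU hpc ?_ ?_
    · rintro z hz
      rw [hmemU] at hz
      obtain ⟨e1, he1, e2, he2, hz0, hz1, hz2, hz3⟩ := hz
      have h1 := mul_le_mul_of_nonneg_left hz1 ha.le
      have h2 := mul_le_mul_of_nonneg_left hz3 hb.le
      have h3 := hcle e1 e2 he1 he2
      linarith
    · rintro z hz hzc
      rw [hmemU] at hz
      obtain ⟨e1, he1, e2, he2, hz0, hz1, hz2, hz3⟩ := hz
      have he1r : (e1:ℝ) ≤ (m1:ℝ) := by exact_mod_cast he1
      have he2r : (e2:ℝ) ≤ (m2:ℝ) := by exact_mod_cast he2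
      have h1 := mul_le_mul_of_nonneg_left hz1 ha.le
      have h2 := mul_le_mul_of_nonneg_left hz3 hb.le
      have h3 := hcle e1 e2 he1 he2
      have hceq : a * rate1 T q e1 e2 + b * rate2 T q e1 e2 = c := by linarith
      have hexpr : ((T:ℝ) - (m2:ℝ) - 2*(d1:ℝ)) * ((e2:ℝ) * ((T:ℝ) - (e2:ℝ) - (e1:ℝ))) +
          (m2:ℝ) * ((e1:ℝ) * ((T:ℝ) - (e2:ℝ) - (e1:ℝ))) =
          (m2:ℝ) * ((T:ℝ) - (m2:ℝ) - (d1:ℝ))^2 := by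
        have := (hcorner e1 e2 he1 he2).symm.trans hceq
        rw [hcdef] at this
        exact mul_right_cancel₀ (ne_of_gt hL) this
      obtain ⟨hE2, hE1⟩ := key_eq (m2:ℝ) (d1:ℝ) (e2:ℝ) (e1:ℝ) (T:ℝ) hm2r (by positivity)
        (by positivity) he2r (by positivity) (by linarith) (by linarith) hexpr
      have hR1 : rate1 T q e1 e2 = rate1 T q d1 m2 := by
        rw [rate1, rate1, hE1, hE2]
      have hR2 : rate2 T q e1 e2 = rate2 T q d1 m2 := by
        rw [rate2, rate2, hE1, hE2]
      rw [hR1] at hz1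
      rw [hR2] at hz3
      have hzeq : a * z.1 + b * z.2 = a * rate1 T q d1 m2 + b * rate2 T q d1 m2 :=
        hzc.trans hpc.symm
      have hz1e : z.1 = rate1 T q d1 m2 := by
        by_contra hne
        have hlt := lt_of_le_of_ne hz1 hne
        have := mul_lt_mul_of_pos_left hlt ha
        have := mul_le_mul_of_nonneg_left hz3 hb.le
        linarith
      have hz2e : z.2 = rate2 T q d1 m2 := by
        by_contra hne
        have hlt := lt_of_le_of_ne hz3 hne
        have := mul_lt_mul_of_pos_left hlt hb
        have := mul_le_mul_of_nonneg_left hz1 ha.le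
        linarith
      exact Prod.ext hz1e hz2e

set_option maxHeartbeats 1000000 in
/-- The extreme points of `R_col`, other than the origin, are exactly the rate pairs
`(R1(d1,d2), R2(d1,d2))` for `(d1,d2)` in `D̃ = {(d1,m2) : d1 ≤ m1} ∪ {(m1,d2) : d2 ≤ m2}`. -/
theorem extremePoints_rateRegionCol (m1 m2 T : ℕ) (q : ℝ)
    (hm1 : 1 ≤ m1) (hm2 : 1 ≤ m2) (hT : 2 * (m1 + m2) + 2 ≤ T) (hq : 2 ≤ q) :
    Set.extremePoints ℝ (rateRegionCol T m1 m2 q) \ {(0, 0)} =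
      {p : ℝ × ℝ | ∃ d1 d2 : ℕ,
        ((d1 ≤ m1 ∧ d2 = m2) ∨ (d1 = m1 ∧ d2 ≤ m2)) ∧
        p = (rate1 T q d1 d2, rate2 T q d1 d2)} := by
  have hL : 0 < Real.logb 2 q := Real.logb_pos one_lt_two (by linarith)
  have hTr : 2 * ((m1:ℝ) + (m2:ℝ)) + 2 ≤ (T:ℝ) := by exact_mod_cast hT
  have hm1r : (1:ℝ) ≤ (m1:ℝ) := by exact_mod_cast hm1
  have hm2r : (1:ℝ) ≤ (m2:ℝ) := by exact_mod_cast hm2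
  ext p
  simp only [Set.mem_diff, Set.mem_singleton_iff, Set.mem_setOf_eq]
  constructor
  · rintro ⟨hext, hp0⟩
    rw [rateRegionCol] at hext
    set U : Set (ℝ × ℝ) :=
      ⋃ (e1 : ℕ) (_ : e1 ≤ m1) (e2 : ℕ) (_ : e2 ≤ m2), rateRect T q e1 e2 with hUdef
    have hrectU : ∀ (f1 f2 : ℕ), f1 ≤ m1 → f2 ≤ m2 → ∀ z : ℝ × ℝ,
        z ∈ rateRect T q f1 f2 → z ∈ convexHull ℝ U := by
      intro f1 f2 h1 h2 z hz
      apply subset_convexHull ℝ U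
      simp only [hUdef, Set.mem_iUnion]
      exact ⟨f1, h1, f2, h2, hz⟩
    obtain ⟨hpmem, hextr⟩ := mem_extremePoints.mp hext
    have hwig : ∀ x y : ℝ × ℝ, x ∈ convexHull ℝ U → y ∈ convexHull ℝ U →
        (1/2 : ℝ) • x + (1/2 : ℝ) • y = p → x = p ∧ y = p := by
      intro x y hx hy hmid
      exact hextr x hx y hy ⟨1/2, 1/2, by norm_num, by norm_num, by norm_num, hmid⟩
    have hpU : p ∈ U := extremePoints_convexHull_subset hext
    simp only [hUdef, Set.mem_iUnion] at hpU
    obtain ⟨e1, he1, e2, he2, hpr⟩ := hpU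
    simp only [rateRect, Set.mem_setOf_eq] at hpr
    obtain ⟨hx0, hx1, hy0, hy1⟩ := hpr
    have he1r : (e1:ℝ) ≤ (m1:ℝ) := by exact_mod_cast he1
    have he2r : (e2:ℝ) ≤ (m2:ℝ) := by exact_mod_cast he2
    have he1nn : (0:ℝ) ≤ (e1:ℝ) := Nat.cast_nonneg e1
    have he2nn : (0:ℝ) ≤ (e2:ℝ) := Nat.cast_nonneg e2
    have hM1 : rate1 T q e1 e2 ≤ rate1 T q m1 0 := by
      rw [rate1, rate1]; push_cast
      nlinarith [mul_le_mul_of_nonneg_right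
        (show (e1:ℝ) * ((T:ℝ) - e1 - e2) ≤ (m1:ℝ) * ((T:ℝ) - m1 - 0) by
          nlinarith [mul_nonneg (sub_nonneg.mpr he1r)
            (show (0:ℝ) ≤ (T:ℝ) - m1 - e1 by linarith),
            mul_nonneg he1nn he2nn]) hL.le]
    have hM2 : rate2 T q e1 e2 ≤ rate2 T q 0 m2 := by
      rw [rate2, rate2]; push_cast
      nlinarith [mul_le_mul_of_nonneg_right
        (show (e2:ℝ) * ((T:ℝ) - e1 - e2) ≤ (m2:ℝ) * ((T:ℝ) - 0 - m2) by
          nlinarith [mul_nonneg (sub_nonneg.mpr he2r)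
            (show (0:ℝ) ≤ (T:ℝ) - m2 - e2 by linarith),
            mul_nonneg he1nn he2nn]) hL.le]
    rcases eq_or_lt_of_le hx0 with hx | hx
    · rcases eq_or_lt_of_le hy0 with hy | hy
      · -- p = (0,0), contradiction
        exact absurd (Prod.ext hx.symm hy.symm) hp0
      · -- p.1 = 0, 0 < p.2 : p = (0, rate2 0 m2)
        have hcl : p.2 = rate2 T q 0 m2 := by
          by_contra hne
          have hlt : p.2 < rate2 T q 0 m2 := lt_of_le_of_ne (le_trans hy1 hM2) hne
          have hεpos : 0 < min p.2 (rate2 T q 0 m2 - p.2) := lt_min hy (by linarith)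
          have hε1 : min p.2 (rate2 T q 0 m2 - p.2) ≤ p.2 := min_le_left _ _
          have hε2 : min p.2 (rate2 T q 0 m2 - p.2) ≤ rate2 T q 0 m2 - p.2 := min_le_right _ _
          have hrate10 : rate1 T q 0 m2 = 0 := by rw [rate1]; push_cast; ring
          have hxm : ((0:ℝ), p.2 + min p.2 (rate2 T q 0 m2 - p.2)) ∈ convexHull ℝ U := by
            apply hrectU 0 m2 (Nat.zero_le _) le_rfl
            refine ⟨le_rfl, ?_, ?_, ?_⟩
            · show (0:ℝ) ≤ rate1 T q 0 m2; rw [hrate10]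
            · show (0:ℝ) ≤ p.2 + _; linarith
            · show p.2 + _ ≤ rate2 T q 0 m2; linarith
          have hym : ((0:ℝ), p.2 - min p.2 (rate2 T q 0 m2 - p.2)) ∈ convexHull ℝ U := by
            apply hrectU 0 m2 (Nat.zero_le _) le_rfl
            refine ⟨le_rfl, ?_, ?_, ?_⟩
            · show (0:ℝ) ≤ rate1 T q 0 m2; rw [hrate10]
            · show (0:ℝ) ≤ p.2 - _; linarith
            · show p.2 - _ ≤ rate2 T q 0 m2; linarith
          have hmid : (1/2:ℝ) • ((0:ℝ), p.2 + min p.2 (rate2 T q 0 m2 - p.2))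
              + (1/2:ℝ) • ((0:ℝ), p.2 - min p.2 (rate2 T q 0 m2 - p.2)) = p := by
            simp only [Prod.smul_mk, smul_eq_mul, Prod.mk_add_mk]
            rw [Prod.ext_iff]
            constructor
            · show (1:ℝ)/2 * 0 + 1/2 * 0 = p.1
              rw [← hx]; ring
            · show (1:ℝ)/2 * _ + 1/2 * _ = p.2
              ring
          have hxp := (hwig _ _ hxm hym hmid).1
          have : p.2 + min p.2 (rate2 T q 0 m2 - p.2) = p.2 := congrArg Prod.snd hxp
          linarith
        refine ⟨0, m2, Or.inl ⟨Nat.zero_le _, rfl⟩, ?_⟩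
        rw [Prod.ext_iff]
        refine ⟨?_, hcl⟩
        rw [← hx, rate1]; push_cast; ring
    · rcases eq_or_lt_of_le hy0 with hy | hy
      · -- 0 < p.1, p.2 = 0 : p = (rate1 m1 0, 0)
        have hcl : p.1 = rate1 T q m1 0 := by
          by_contra hne
          have hlt : p.1 < rate1 T q m1 0 := lt_of_le_of_ne (le_trans hx1 hM1) hne
          have hεpos : 0 < min p.1 (rate1 T q m1 0 - p.1) := lt_min hx (by linarith)
          have hε1 : min p.1 (rate1 T q m1 0 - p.1) ≤ p.1 := min_le_left _ _
          have hε2 : min p.1 (rate1 T q m1 0 - p.1) ≤ rate1 T q m1 0 - p.1 := min_le_right _ _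
          have hrate20 : rate2 T q m1 0 = 0 := by rw [rate2]; push_cast; ring
          have hxm : (p.1 + min p.1 (rate1 T q m1 0 - p.1), (0:ℝ)) ∈ convexHull ℝ U := by
            apply hrectU m1 0 le_rfl (Nat.zero_le _)
            refine ⟨?_, ?_, le_rfl, ?_⟩
            · show (0:ℝ) ≤ p.1 + _; linarith
            · show p.1 + _ ≤ rate1 T q m1 0; linarith
            · show (0:ℝ) ≤ rate2 T q m1 0; rw [hrate20]
          have hym : (p.1 - min p.1 (rate1 T q m1 0 - p.1), (0:ℝ)) ∈ convexHull ℝ U := by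
            apply hrectU m1 0 le_rfl (Nat.zero_le _)
            refine ⟨?_, ?_, le_rfl, ?_⟩
            · show (0:ℝ) ≤ p.1 - _; linarith
            · show p.1 - _ ≤ rate1 T q m1 0; linarith
            · show (0:ℝ) ≤ rate2 T q m1 0; rw [hrate20]
          have hmid : (1/2:ℝ) • (p.1 + min p.1 (rate1 T q m1 0 - p.1), (0:ℝ))
              + (1/2:ℝ) • (p.1 - min p.1 (rate1 T q m1 0 - p.1), (0:ℝ)) = p := by
            simp only [Prod.smul_mk, smul_eq_mul, Prod.mk_add_mk]
            rw [Prod.ext_iff]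
            constructor
            · show (1:ℝ)/2 * _ + 1/2 * _ = p.1
              ring
            · show (1:ℝ)/2 * 0 + 1/2 * 0 = p.2
              rw [← hy]; ring
          have hxp := (hwig _ _ hxm hym hmid).1
          have : p.1 + min p.1 (rate1 T q m1 0 - p.1) = p.1 := congrArg Prod.fst hxp
          linarith
        refine ⟨m1, 0, Or.inr ⟨rfl, Nat.zero_le _⟩, ?_⟩
        rw [Prod.ext_iff]
        refine ⟨hcl, ?_⟩
        rw [← hy, rate2]; push_cast; ring
      · -- 0 < p.1, 0 < p.2
        have hs : (0:ℝ) < (T:ℝ) - e1 - e2 := by linarith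
        have he1pos : (1:ℝ) ≤ (e1:ℝ) := by
          rcases Nat.eq_zero_or_pos e1 with rfl | h
          · exfalso; rw [rate1] at hx1; norm_num at hx1; linarith
          · exact_mod_cast h
        have he2pos : (1:ℝ) ≤ (e2:ℝ) := by
          rcases Nat.eq_zero_or_pos e2 with rfl | h
          · exfalso; rw [rate2] at hy1; norm_num at hy1; linarith
          · exact_mod_cast h
        have hpx : p.1 = rate1 T q e1 e2 := by
          by_contra hne
          have hlt : p.1 < rate1 T q e1 e2 := lt_of_le_of_ne hx1 hne
          have hεpos : 0 < min p.1 (rate1 T q e1 e2 - p.1) := lt_min hx (by linarith)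
          have hε1 : min p.1 (rate1 T q e1 e2 - p.1) ≤ p.1 := min_le_left _ _
          have hε2 : min p.1 (rate1 T q e1 e2 - p.1) ≤ rate1 T q e1 e2 - p.1 := min_le_right _ _
          have hxm : (p.1 + min p.1 (rate1 T q e1 e2 - p.1), p.2) ∈ convexHull ℝ U := by
            apply hrectU e1 e2 he1 he2
            refine ⟨?_, ?_, hy0, hy1⟩
            · show (0:ℝ) ≤ p.1 + _; linarith
            · show p.1 + _ ≤ rate1 T q e1 e2; linarith
          have hym : (p.1 - min p.1 (rate1 T q e1 e2 - p.1), p.2) ∈ convexHull ℝ U := by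
            apply hrectU e1 e2 he1 he2
            refine ⟨?_, ?_, hy0, hy1⟩
            · show (0:ℝ) ≤ p.1 - _; linarith
            · show p.1 - _ ≤ rate1 T q e1 e2; linarith
          have hmid : (1/2:ℝ) • (p.1 + min p.1 (rate1 T q e1 e2 - p.1), p.2)
              + (1/2:ℝ) • (p.1 - min p.1 (rate1 T q e1 e2 - p.1), p.2) = p := by
            simp only [Prod.smul_mk, smul_eq_mul, Prod.mk_add_mk]
            rw [Prod.ext_iff]
            exact ⟨by ring, by ring⟩
          have hxp := (hwig _ _ hxm hym hmid).1
          have : p.1 + min p.1 (rate1 T q e1 e2 - p.1) = p.1 := congrArg Prod.fst hxp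
          linarith
        have hpy : p.2 = rate2 T q e1 e2 := by
          by_contra hne
          have hlt : p.2 < rate2 T q e1 e2 := lt_of_le_of_ne hy1 hne
          have hεpos : 0 < min p.2 (rate2 T q e1 e2 - p.2) := lt_min hy (by linarith)
          have hε1 : min p.2 (rate2 T q e1 e2 - p.2) ≤ p.2 := min_le_left _ _
          have hε2 : min p.2 (rate2 T q e1 e2 - p.2) ≤ rate2 T q e1 e2 - p.2 := min_le_right _ _
          have hxm : (p.1, p.2 + min p.2 (rate2 T q e1 e2 - p.2)) ∈ convexHull ℝ U := by
            apply hrectU e1 e2 he1 he2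
            refine ⟨hx0, hx1, ?_, ?_⟩
            · show (0:ℝ) ≤ p.2 + _; linarith
            · show p.2 + _ ≤ rate2 T q e1 e2; linarith
          have hym : (p.1, p.2 - min p.2 (rate2 T q e1 e2 - p.2)) ∈ convexHull ℝ U := by
            apply hrectU e1 e2 he1 he2
            refine ⟨hx0, hx1, ?_, ?_⟩
            · show (0:ℝ) ≤ p.2 - _; linarith
            · show p.2 - _ ≤ rate2 T q e1 e2; linarith
          have hmid : (1/2:ℝ) • (p.1, p.2 + min p.2 (rate2 T q e1 e2 - p.2))
              + (1/2:ℝ) • (p.1, p.2 - min p.2 (rate2 T q e1 e2 - p.2)) = p := by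
            simp only [Prod.smul_mk, smul_eq_mul, Prod.mk_add_mk]
            rw [Prod.ext_iff]
            exact ⟨by ring, by ring⟩
          have hxp := (hwig _ _ hxm hym hmid).1
          have : p.2 + min p.2 (rate2 T q e1 e2 - p.2) = p.2 := congrArg Prod.snd hxp
          linarith
        by_cases he1m : e1 = m1
        · exact ⟨e1, e2, Or.inr ⟨he1m, he2⟩, Prod.ext hpx hpy⟩
        by_cases he2m : e2 = m2
        · exact ⟨e1, e2, Or.inl ⟨he1, he2m⟩, Prod.ext hpx hpy⟩
        exfalso
        have he1m' : e1 + 1 ≤ m1 := Nat.succ_le_of_lt (lt_of_le_of_ne he1 he1m)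
        have he2m' : e2 + 1 ≤ m2 := Nat.succ_le_of_lt (lt_of_le_of_ne he2 he2m)
        have he1m'r : (e1:ℝ) + 1 ≤ (m1:ℝ) := by exact_mod_cast he1m'
        have he2m'r : (e2:ℝ) + 1 ≤ (m2:ℝ) := by exact_mod_cast he2m'
        have hs1 : (0:ℝ) < (T:ℝ) - e1 - e2 - 1 := by linarith
        have hden : ((2:ℝ)*((T:ℝ) - e1 - e2 - 1)) ≠ 0 := by positivity
        have hδpos : 0 < Real.logb 2 q * ((T:ℝ) - 2*e1 - 2*e2 - 1) / 2 :=
          div_pos (mul_pos hL (by linarith)) (by norm_num)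
        have hδle1 : Real.logb 2 q * ((T:ℝ) - 2*e1 - 2*e2 - 1) / 2 ≤ p.1 := by
          rw [hpx, rate1]
          nlinarith [mul_nonneg (mul_nonneg (show (0:ℝ) ≤ 2*(e1:ℝ) - 1 by linarith) hs.le) hL.le,
            mul_nonneg hL.le he1nn, mul_nonneg hL.le he2nn, hL.le]
        have hδle2 : Real.logb 2 q * ((T:ℝ) - 2*e1 - 2*e2 - 1) / 2 ≤ p.2 := by
          rw [hpy, rate2]
          nlinarith [mul_nonneg (mul_nonneg (show (0:ℝ) ≤ 2*(e2:ℝ) - 1 by linarith) hs.le) hL.le,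
            mul_nonneg hL.le he1nn, mul_nonneg hL.le he2nn, hL.le]
        have hlam0 : 0 ≤ ((T:ℝ) - e1 - e2 - 1 + e1 - e2) / (2*((T:ℝ) - e1 - e2 - 1)) := by
          apply div_nonneg _ (by linarith)
          linarith
        have hlam1 : 0 ≤ 1 - ((T:ℝ) - e1 - e2 - 1 + e1 - e2) / (2*((T:ℝ) - e1 - e2 - 1)) := by
          rw [sub_nonneg, div_le_one (by linarith)]
          linarith
        have hc1m : (rate1 T q (e1+1) e2, rate2 T q (e1+1) e2) ∈ convexHull ℝ U := by
          apply hrectU (e1+1) e2 he1m' he2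
          refine ⟨?_, le_rfl, ?_, le_rfl⟩
          · rw [rate1]; push_cast
            exact mul_nonneg (mul_nonneg (by positivity) (by linarith)) hL.le
          · rw [rate2]; push_cast
            exact mul_nonneg (mul_nonneg (by positivity) (by linarith)) hL.le
        have hc2m : (rate1 T q e1 (e2+1), rate2 T q e1 (e2+1)) ∈ convexHull ℝ U := by
          apply hrectU e1 (e2+1) he1 he2m'
          refine ⟨?_, le_rfl, ?_, le_rfl⟩
          · rw [rate1]; push_cast
            exact mul_nonneg (mul_nonneg (by positivity) (by linarith)) hL.le
          · rw [rate2]; push_cast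
            exact mul_nonneg (mul_nonneg (by positivity) (by linarith)) hL.le
        have hcomb := (convex_convexHull ℝ U) hc1m hc2m hlam0 hlam1 (by ring)
        have heqpt : (((T:ℝ) - e1 - e2 - 1 + e1 - e2) / (2*((T:ℝ) - e1 - e2 - 1)))
              • (rate1 T q (e1+1) e2, rate2 T q (e1+1) e2)
            + (1 - ((T:ℝ) - e1 - e2 - 1 + e1 - e2) / (2*((T:ℝ) - e1 - e2 - 1)))
              • (rate1 T q e1 (e2+1), rate2 T q e1 (e2+1))
            = (p.1 + Real.logb 2 q * ((T:ℝ) - 2*e1 - 2*e2 - 1) / 2,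
               p.2 + Real.logb 2 q * ((T:ℝ) - 2*e1 - 2*e2 - 1) / 2) := by
          rw [hpx, hpy]
          simp only [rate1, rate2, Prod.smul_mk, smul_eq_mul, Prod.mk_add_mk, Prod.mk.injEq]
          push_cast
          constructor
          · field_simp
            ring
          · field_simp
            ring
        rw [heqpt] at hcomb
        have hym : ((p.1 - Real.logb 2 q * ((T:ℝ) - 2*e1 - 2*e2 - 1) / 2),
            (p.2 - Real.logb 2 q * ((T:ℝ) - 2*e1 - 2*e2 - 1) / 2)) ∈ convexHull ℝ U := by
          apply hrectU e1 e2 he1 he2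
          refine ⟨?_, ?_, ?_, ?_⟩
          · show (0:ℝ) ≤ p.1 - _; linarith
          · show p.1 - _ ≤ rate1 T q e1 e2; linarith [hδpos, hx1]
          · show (0:ℝ) ≤ p.2 - _; linarith
          · show p.2 - _ ≤ rate2 T q e1 e2; linarith [hδpos, hy1]
        have hmid : (1/2:ℝ) • (p.1 + Real.logb 2 q * ((T:ℝ) - 2*e1 - 2*e2 - 1) / 2,
               p.2 + Real.logb 2 q * ((T:ℝ) - 2*e1 - 2*e2 - 1) / 2)
            + (1/2:ℝ) • ((p.1 - Real.logb 2 q * ((T:ℝ) - 2*e1 - 2*e2 - 1) / 2),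
               (p.2 - Real.logb 2 q * ((T:ℝ) - 2*e1 - 2*e2 - 1) / 2)) = p := by
          simp only [Prod.smul_mk, smul_eq_mul, Prod.mk_add_mk]
          rw [Prod.ext_iff]
          exact ⟨by ring, by ring⟩
        have hxp := (hwig _ _ hcomb hym hmid).1
        have : p.1 + Real.logb 2 q * ((T:ℝ) - 2*e1 - 2*e2 - 1) / 2 = p.1 :=
          congrArg Prod.fst hxp
        linarith
  · rintro ⟨d1, d2, hd, rfl⟩
    rcases hd with ⟨hd1, hd2⟩ | ⟨hd1, hd2⟩
    · rw [hd2]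
      have hd1r : (d1:ℝ) ≤ (m1:ℝ) := by exact_mod_cast hd1
      refine ⟨corner_extreme m1 m2 T q hm1 hm2 hT hq d1 m2 hd1 le_rfl (Or.inr rfl), ?_⟩
      intro h
      rw [Prod.mk.injEq] at h
      have hpos : 0 < rate2 T q d1 m2 := by
        rw [rate2]
        exact mul_pos (mul_pos (by linarith) (by linarith)) hL
      linarith [h.2]
    · rw [hd1]
      have hd2r : (d2:ℝ) ≤ (m2:ℝ) := by exact_mod_cast hd2
      refine ⟨corner_extreme m1 m2 T q hm1 hm2 hT hq m1 d2 le_rfl hd2 (Or.inl rfl), ?_⟩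
      intro h
      rw [Prod.mk.injEq] at h
      have hpos : 0 < rate1 T q m1 d2 := by
        rw [rate1]
        exact mul_pos (mul_pos (by linarith) (by linarith)) hL
      linarith [h.1]
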